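/- Let l and m be positive integers, and let W be a random variable with the Beta(l, m) density f(x) = ((l+m−1)!/((l−1)!·(m−1)!)) · x^{l−1}(1−x)^{m−1} on [0, 1]. Then E(W · log W) = ((l+m−1)!/((l−1)!·(m−1)!)) · ∫₀¹ x^l (1−x)^{m−1} log x dx = −(l/(l+m)) · (ξ_{l+m} − ξ_l), where ξ_n = Σ_{j=1}^n 1/j is the n-th harmonic number. -/

import Mathlib

/-- The `n`-th harmonic number `ξ_n = Σ_{j=1}^n 1/j`. -/
noncomputable def xi (n : ℕ) : ℝ := ∑ j ∈ Finset.range n, (1 : ℝ) / (j + 1)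

lemma xi_succ (n : ℕ) : xi (n + 1) = xi n + 1 / ((n : ℝ) + 1) := by
  simp [xi, Finset.sum_range_succ]

lemma cont_integrand (a b : ℕ) :
    Continuous (fun x : ℝ => x ^ (a + 1) * (1 - x) ^ b * Real.log x) := by
  have h : (fun x : ℝ => x ^ (a + 1) * (1 - x) ^ b * Real.log x)
      = fun x : ℝ => x ^ a * (1 - x) ^ b * (x * Real.log x) := by
    funext x; ring
  rw [h]
  exact ((continuous_pow a).mul ((continuous_const.sub continuous_id).pow b)).mul
    Real.continuous_mul_log

lemma integral_pow_succ_log (a : ℕ) :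
    ∫ x in (0:ℝ)..1, x ^ (a + 1) * Real.log x = -(1 / ((a : ℝ) + 2) ^ 2) := by
  have h2 : ((a : ℝ) + 2) ≠ 0 := by positivity
  set F : ℝ → ℝ := fun x => x ^ a * (x * Real.log x) * x / ((a : ℝ) + 2)
      - x ^ (a + 2) / (((a : ℝ) + 2) ^ 2) with hF
  have hcontF : Continuous F := by
    apply Continuous.sub
    · exact (((continuous_pow a).mul Real.continuous_mul_log).mul continuous_id).div_const _
    · exact (continuous_pow _).div_const _
  have hderiv : ∀ x ∈ Set.Ioo (0:ℝ) 1, HasDerivAt F (x ^ (a + 1) * Real.log x) x := by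
    intro x hx
    have hx0 : x ≠ 0 := hx.1.ne'
    have h1 : HasDerivAt (fun x : ℝ => x ^ (a + 2)) (((a : ℝ) + 2) * x ^ (a + 1)) x := by
      have := hasDerivAt_pow (a + 2) x
      rw [show a + 2 - 1 = a + 1 by omega] at this
      exact_mod_cast this
    have h2' : HasDerivAt Real.log (1 / x) x := by
      simpa [one_div] using Real.hasDerivAt_log hx0
    have hD := ((h1.mul h2').div_const ((a : ℝ) + 2)).sub (h1.div_const (((a : ℝ) + 2) ^ 2))
    have hEq : F = fun x : ℝ => x ^ (a + 2) * Real.log x / ((a : ℝ) + 2)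
        - x ^ (a + 2) / (((a : ℝ) + 2) ^ 2) := by
      funext y; simp only [hF]; ring
    rw [hEq]
    refine hD.congr_deriv ?_
    field_simp
    ring
  have hint : IntervalIntegrable (fun x : ℝ => x ^ (a + 1) * Real.log x) MeasureTheory.volume 0 1 := by
    have := cont_integrand a 0
    simpa using this.intervalIntegrable 0 1
  have := intervalIntegral.integral_eq_sub_of_hasDeriv_right_of_le (by norm_num : (0:ℝ) ≤ 1)
    hcontF.continuousOn (fun x hx => (hderiv x hx).hasDerivWithinAt) hint
  rw [this]
  simp [hF, Real.log_zero, Real.log_one]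

lemma key (b : ℕ) : ∀ a : ℕ,
    ∫ x in (0:ℝ)..1, x ^ (a + 1) * (1 - x) ^ b * Real.log x
      = (((a + 1).factorial : ℝ) * (b.factorial : ℝ) / ((a + b + 2).factorial : ℝ)) *
          (xi (a + 1) - xi (a + b + 2)) := by
  induction b with
  | zero =>
    intro a
    have hfac : ((a + 1).factorial : ℝ) ≠ 0 := Nat.cast_ne_zero.mpr (Nat.factorial_ne_zero _)
    have h2 : ((a : ℝ) + 2) ≠ 0 := by positivity
    have hL : ∫ x in (0:ℝ)..1, x ^ (a + 1) * (1 - x) ^ 0 * Real.log x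
        = ∫ x in (0:ℝ)..1, x ^ (a + 1) * Real.log x := by
      congr 1; funext x; ring
    rw [hL, integral_pow_succ_log a]
    rw [show a + 0 + 2 = (a + 1) + 1 by omega, xi_succ (a + 1), Nat.factorial_succ (a + 1)]
    push_cast
    field_simp
    ring
  | succ b ih =>
    intro a
    have hint1 : IntervalIntegrable (fun x : ℝ => x ^ (a + 1) * (1 - x) ^ b * Real.log x)
        MeasureTheory.volume 0 1 := (cont_integrand a b).intervalIntegrable 0 1
    have hint2 : IntervalIntegrable (fun x : ℝ => x ^ (a + 2) * (1 - x) ^ b * Real.log x)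
        MeasureTheory.volume 0 1 := (cont_integrand (a + 1) b).intervalIntegrable 0 1
    have hsplit : ∫ x in (0:ℝ)..1, x ^ (a + 1) * (1 - x) ^ (b + 1) * Real.log x
        = (∫ x in (0:ℝ)..1, x ^ (a + 1) * (1 - x) ^ b * Real.log x)
          - ∫ x in (0:ℝ)..1, x ^ (a + 2) * (1 - x) ^ b * Real.log x := by
      rw [← intervalIntegral.integral_sub hint1 hint2]
      congr 1; funext x; ring
    have ih1 := ih a
    have ih2 := ih (a + 1)
    rw [show a + 1 + 1 = a + 2 from rfl, show a + 1 + b + 2 = (a + b + 2) + 1 by omega] at ih2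
    rw [hsplit, ih1, ih2]
    rw [show a + (b + 1) + 2 = (a + b + 2) + 1 by omega]
    rw [xi_succ (a + b + 2), Nat.factorial_succ (a + b + 2), Nat.factorial_succ (b),
      show a + 2 = (a + 1) + 1 from rfl, xi_succ (a + 1), Nat.factorial_succ (a + 1)]
    have hf1 : ((a + 1).factorial : ℝ) ≠ 0 := Nat.cast_ne_zero.mpr (Nat.factorial_ne_zero _)
    have hf2 : ((b).factorial : ℝ) ≠ 0 := Nat.cast_ne_zero.mpr (Nat.factorial_ne_zero _)
    have hf3 : ((a + b + 2).factorial : ℝ) ≠ 0 := Nat.cast_ne_zero.mpr (Nat.factorial_ne_zero _)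
    have h4 : ((a : ℝ) + (b : ℝ) + 2 + 1) ≠ 0 := by positivity
    have h5 : ((a : ℝ) + 1 + 1) ≠ 0 := by positivity
    push_cast
    field_simp
    ring

/-- for a random variable `W` with the Beta(l, m) density
`f(x) = ((l+m−1)!/((l−1)!(m−1)!))·x^{l−1}(1−x)^{m−1}` on `[0,1]`,
`E(W log W) = ((l+m−1)!/((l−1)!(m−1)!))·∫₀¹ x^l (1−x)^{m−1} log x dx
            = −(l/(l+m))·(ξ_{l+m} − ξ_l)`. -/
theorem beta_expectation_W_logW (l m : ℕ) (hl : 1 ≤ l) (hm : 1 ≤ m) :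
    (∫ x in (0:ℝ)..1, (x * Real.log x) *
        (((l + m - 1).factorial : ℝ) / ((l - 1).factorial * (m - 1).factorial) *
          x ^ (l - 1) * (1 - x) ^ (m - 1))) =
      ((l + m - 1).factorial : ℝ) / ((l - 1).factorial * (m - 1).factorial) *
        ∫ x in (0:ℝ)..1, x ^ l * (1 - x) ^ (m - 1) * Real.log x ∧
    (∫ x in (0:ℝ)..1, (x * Real.log x) *
        (((l + m - 1).factorial : ℝ) / ((l - 1).factorial * (m - 1).factorial) *
          x ^ (l - 1) * (1 - x) ^ (m - 1))) =
      -((l : ℝ) / ((l : ℝ) + (m : ℝ))) * (xi (l + m) - xi l) := by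
  obtain ⟨a, rfl⟩ : ∃ a, l = a + 1 := ⟨l - 1, by omega⟩
  obtain ⟨b, rfl⟩ : ∃ b, m = b + 1 := ⟨m - 1, by omega⟩
  have hidx : a + 1 + (b + 1) - 1 = a + b + 1 := by omega
  have hidx2 : a + 1 - 1 = a := rfl
  have hidx3 : b + 1 - 1 = b := rfl
  set C : ℝ := ((a + b + 1).factorial : ℝ) / ((a.factorial : ℝ) * (b.factorial : ℝ)) with hC
  have hCeq : ((a + 1 + (b + 1) - 1).factorial : ℝ) /
      (((a + 1 - 1).factorial : ℝ) * ((b + 1 - 1).factorial : ℝ)) = C := by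
    rw [hidx, hidx2, hidx3]
  have hptwise : ∀ x : ℝ, (x * Real.log x) * (C * x ^ a * (1 - x) ^ b)
      = C * (x ^ (a + 1) * (1 - x) ^ b * Real.log x) := by
    intro x; ring
  have hfirst : (∫ x in (0:ℝ)..1, (x * Real.log x) * (C * x ^ a * (1 - x) ^ b))
      = C * ∫ x in (0:ℝ)..1, x ^ (a + 1) * (1 - x) ^ b * Real.log x := by
    rw [← intervalIntegral.integral_const_mul]
    congr 1; funext x; exact hptwise x
  constructor
  · rw [hidx, hidx2, hidx3]
    exact hfirst
  · rw [hidx, hidx2, hidx3, hfirst, key b a]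
    rw [show a + 1 + (b + 1) = a + b + 2 by omega]
    rw [hC, Nat.factorial_succ a, show a + b + 2 = (a + b + 1) + 1 from rfl,
      Nat.factorial_succ (a + b + 1)]
    have hf1 : ((a).factorial : ℝ) ≠ 0 := Nat.cast_ne_zero.mpr (Nat.factorial_ne_zero _)
    have hf2 : ((b).factorial : ℝ) ≠ 0 := Nat.cast_ne_zero.mpr (Nat.factorial_ne_zero _)
    have hf3 : ((a + b + 1).factorial : ℝ) ≠ 0 := Nat.cast_ne_zero.mpr (Nat.factorial_ne_zero _)
    have h4 : ((a : ℝ) + (b : ℝ) + 1 + 1) ≠ 0 := by positivity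
    have h5 : ((a : ℝ) + 1) ≠ 0 := by positivity
    push_cast
    field_simp
    ring
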